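/- Let n ≥ 1 and k ≥ 0, let f be a gamble on 𝒳^n and let f̃ be its cylindrical extension to 𝒳^{n+k}, f̃(z₁,…,z_{n+k}) := f(z₁,…,z_n). Then for every m' ∈ 𝒩^{n+k}: MuHy^{n+k}(f̃|m') = Σ_{m∈𝒩^n} (ν(m'−m)·ν(m)/ν(m'))·MuHy^n(f|m), where ν(m'−m) := 0 unless m ≤ m' componentwise. -/

import Mathlib

open Finset Filter Topology

/-- A coherent lower prevision on the gambles over a finite nonempty space `Ω`. -/
def LowerPrevCoherent {Ω : Type*} [Fintype Ω] [Nonempty Ω] (P : (Ω → ℝ) → ℝ) : Prop :=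
  (∀ f : Ω → ℝ, sInf (Set.range f) ≤ P f) ∧
  (∀ (f : Ω → ℝ) (l : ℝ), 0 ≤ l → P (fun ω => l * f ω) = l * P f) ∧
  (∀ f g : Ω → ℝ, P f + P g ≤ P (f + g))

/-- A linear prevision on the gambles over a finite nonempty space `Ω`. -/
def LinearPrevision {Ω : Type*} [Fintype Ω] [Nonempty Ω] (P : (Ω → ℝ) → ℝ) : Prop :=
  (∀ f g : Ω → ℝ, P (f + g) = P f + P g) ∧
  (∀ (l : ℝ) (f : Ω → ℝ), P (fun ω => l * f ω) = l * P f) ∧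
  (∀ f : Ω → ℝ, (∀ ω, 0 ≤ f ω) → 0 ≤ P f) ∧
  P (fun _ => 1) = 1

/-- Exchangeability of a lower prevision on gambles on `X^N`:
`P (πf − f) ≥ 0` for every gamble `f` and every permutation `π`. -/
def Exchangeable {X : Type*} {N : ℕ} (P : ((Fin N → X) → ℝ) → ℝ) : Prop :=
  ∀ (f : (Fin N → X) → ℝ) (π : Equiv.Perm (Fin N)),
    0 ≤ P (fun x => f (fun k => x (π k)) - f x)

/-- The set of count vectors `𝒩^n`. -/
abbrev CVec (X : Type*) [Fintype X] (n : ℕ) : Type _ := {m : X → ℕ // ∑ x, m x = n}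

noncomputable instance {X : Type*} [Fintype X] [DecidableEq X] (n : ℕ) : Fintype (CVec X n) := by
  have key : ∀ (m : CVec X n) (x : X), m.1 x < n + 1 := by
    intro m x
    have h1 : m.1 x ≤ ∑ y, m.1 y :=
      Finset.single_le_sum (fun i _ => Nat.zero_le _) (Finset.mem_univ x)
    have h2 := m.2
    omega
  exact Fintype.ofInjective (fun m : CVec X n => fun x => (⟨m.1 x, key m x⟩ : Fin (n+1)))
    (fun a b hab => Subtype.ext (funext fun x => congrArg Fin.val (congrFun hab x)))

instance {X : Type*} [Fintype X] [DecidableEq X] [Nonempty X] (n : ℕ) :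
    Nonempty (CVec X n) :=
  ⟨⟨fun x => if x = Classical.arbitrary X then n else 0, by simp⟩⟩

/-- The counting map `T^n : X^n → 𝒩^n`. -/
def countMap {X : Type*} [Fintype X] [DecidableEq X] (n : ℕ) (z : Fin n → X) : CVec X n :=
  ⟨fun x => (Finset.univ.filter fun k => z k = x).card, by
    have h := Finset.card_eq_sum_card_fiberwise (f := z) (s := Finset.univ) (t := Finset.univ)
      (fun k _ => Finset.mem_univ (z k))
    simpa using h.symm⟩

/-- `ν(m) = n!/∏ₓ mₓ!` for a count vector `m ∈ 𝒩^n`. -/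
def nu {X : Type*} [Fintype X] {n : ℕ} (m : CVec X n) : ℕ :=
  Nat.multinomial Finset.univ m.1

/-- `ν(μ − m)`, which is `0` unless `m ≤ μ` componentwise. -/
def nuSub {X : Type*} [Fintype X] {n k : ℕ} (μ : CVec X (n + k)) (m : CVec X n) : ℕ :=
  if ∀ x, m.1 x ≤ μ.1 x then Nat.multinomial Finset.univ (fun x => μ.1 x - m.1 x) else 0

/-- The multiple hyper-geometric prevision `MuHy^n(f|m) = (1/ν(m)) ∑_{z∈[m]} f(z)`. -/
noncomputable def MuHy {X : Type*} [Fintype X] [DecidableEq X] {n : ℕ}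
    (f : (Fin n → X) → ℝ) (m : CVec X n) : ℝ :=
  (∑ z ∈ Finset.univ.filter fun z : Fin n → X => countMap n z = m, f z) / (nu m : ℝ)

/-- The `X`-simplex `Σ_X`, as a subtype of `X → ℝ`. -/
abbrev SimplexPt (X : Type*) [Fintype X] : Type _ :=
  {θ : X → ℝ // (∀ x, 0 ≤ θ x) ∧ ∑ x, θ x = 1}

/-- The Bernstein basis polynomial `B_m(θ) = ν(m) ∏ₓ θₓ^{mₓ}`. -/
noncomputable def Bern {X : Type*} [Fintype X] {n : ℕ} (m : CVec X n) (θ : X → ℝ) : ℝ :=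
  (nu m : ℝ) * ∏ x, θ x ^ m.1 x

/-- The count multinomial expectation `CoMn^n(g|θ) = ∑_m g(m) B_m(θ)`. -/
noncomputable def CoMn {X : Type*} [Fintype X] [DecidableEq X] {n : ℕ} (g : CVec X n → ℝ) (θ : X → ℝ) : ℝ :=
  ∑ m : CVec X n, g m * Bern m θ

/-- The multinomial expectation `Mn^n(f|θ) = ∑_z f(z) ∏ₓ θₓ^{Tₓ(z)}`. -/
noncomputable def Mn {X : Type*} [Fintype X] [DecidableEq X] {n : ℕ}
    (f : (Fin n → X) → ℝ) (θ : X → ℝ) : ℝ :=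
  ∑ z : Fin n → X, f z * ∏ x, θ x ^ (countMap n z).1 x

/-- `CoMn^n(g|·)` as a function on the simplex. -/
noncomputable def CoMnP {X : Type*} [Fintype X] [DecidableEq X] {n : ℕ} (g : CVec X n → ℝ)
    (θ : SimplexPt X) : ℝ :=
  CoMn g θ.1

/-- `Mn^n(f|·)` as a function on the simplex. -/
noncomputable def MnP {X : Type*} [Fintype X] [DecidableEq X] {n : ℕ}
    (f : (Fin n → X) → ℝ) (θ : SimplexPt X) : ℝ :=
  Mn f θ.1

/-- Polynomial gambles on the simplex: the set `𝒱(Σ_X)`. -/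
def IsPolyGamble {X : Type*} [Fintype X] [DecidableEq X] (p : SimplexPt X → ℝ) : Prop :=
  ∃ n : ℕ, 1 ≤ n ∧ ∃ g : CVec X n → ℝ, p = fun θ => CoMnP g θ

/-- Coherence of a functional on the linear space `𝒱(Σ_X)` of polynomial gambles. -/
def CoherentOnPoly {X : Type*} [Fintype X] [DecidableEq X] (S : (SimplexPt X → ℝ) → ℝ) : Prop :=
  (∀ p, IsPolyGamble p → sInf (Set.range p) ≤ S p) ∧
  (∀ p, IsPolyGamble p → ∀ l : ℝ, 0 ≤ l → S (fun θ => l * p θ) = l * S p) ∧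
  (∀ p q, IsPolyGamble p → IsPolyGamble q → S p + S q ≤ S (p + q))

/-- Cylindrical extension of a gamble on `X^n` to `X^{n+k}`. -/
def cylExt {X : Type*} {n k : ℕ} (f : (Fin n → X) → ℝ) : (Fin (n + k) → X) → ℝ :=
  fun z => f fun i => z (Fin.castLE (Nat.le_add_right n k) i)

/-- Time consistency of a family of lower previsions on the `X^n`. -/
def PTimeConsistent {X : Type*} (P : ∀ n : ℕ, ((Fin n → X) → ℝ) → ℝ) : Prop :=
  ∀ n : ℕ, 1 ≤ n → ∀ (k : ℕ) (f : (Fin n → X) → ℝ), P n f = P (n + k) (cylExt f)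

/-- Time consistency of a family of count lower previsions on the `𝒩^n`. -/
def QTimeConsistent {X : Type*} [Fintype X] [DecidableEq X] (Q : ∀ n : ℕ, (CVec X n → ℝ) → ℝ) : Prop :=
  ∀ n : ℕ, 1 ≤ n → ∀ (k : ℕ) (h : CVec X n → ℝ),
    Q n h = Q (n + k) (fun μ => ∑ m : CVec X n, ((nuSub μ m : ℝ) * (nu m : ℝ) / (nu μ : ℝ)) * h m)

/-- The relative frequency vector `m/n ∈ Σ_X` of a count vector `m ∈ 𝒩^n`, `n ≥ 1`. -/
noncomputable def freqPt {X : Type*} [Fintype X] {n : ℕ} (hn : 0 < n) (m : CVec X n) :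
    SimplexPt X :=
  ⟨fun x => (m.1 x : ℝ) / n,
   fun x => div_nonneg (Nat.cast_nonneg _) (Nat.cast_nonneg _),
   by
    rw [← Finset.sum_div]
    have h : (∑ x, (m.1 x : ℝ)) = (n : ℝ) := by exact_mod_cast m.2
    rw [h]
    exact div_self (Nat.cast_ne_zero.mpr hn.ne')⟩

/-- `ḡ(μ) = ∑_m (ν(m) ν(μ−m) / ν(μ)) g(m)`. -/
noncomputable def gbar {X : Type*} [Fintype X] [DecidableEq X] {n k : ℕ}
    (g : CVec X n → ℝ) (μ : CVec X (n + k)) : ℝ :=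
  ∑ m : CVec X n, ((nu m : ℝ) * (nuSub μ m : ℝ) / (nu μ : ℝ)) * g m


section Aux

variable {X : Type*} [Fintype X] [DecidableEq X]

lemma mult_rec (c : X → ℕ) (k : ℕ) (hc : ∑ x, c x = k + 1) :
    Nat.multinomial Finset.univ c =
      ∑ x : X, if 0 < c x then
        Nat.multinomial Finset.univ (fun y => c y - if y = x then 1 else 0) else 0 := by
  have hP : 0 < ∏ x, (c x).factorial := Finset.prod_pos (fun x _ => Nat.factorial_pos _)
  apply Nat.eq_of_mul_eq_mul_left hP
  rw [Finset.mul_sum]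
  have hL : (∏ x, (c x).factorial) * Nat.multinomial Finset.univ c = (k+1).factorial := by
    rw [Nat.multinomial_spec, hc]
  rw [hL]
  have hterm : ∀ x : X,
      (∏ y, (c y).factorial) *
        (if 0 < c x then Nat.multinomial Finset.univ (fun y => c y - if y = x then 1 else 0)
         else 0)
      = c x * k.factorial := by
    intro x
    by_cases hx : 0 < c x
    · simp only [hx, if_pos]
      set c' : X → ℕ := fun y => c y - if y = x then 1 else 0 with hc'
      have hsum' : ∑ y, c' y = k := by
        have h1 : ∑ y, c' y = (∑ y, c y) - (∑ y : X, if y = x then 1 else 0) := by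
          simp only [hc']
          rw [Finset.sum_tsub_distrib]
          intro y _
          by_cases h : y = x <;> simp [h] <;> omega
        simp only [Finset.sum_ite_eq', Finset.mem_univ, if_pos] at h1
        omega
      have hfac : ∏ y, (c y).factorial = c x * ∏ y, (c' y).factorial := by
        rw [← Finset.prod_erase_mul _ _ (Finset.mem_univ x),
            ← Finset.prod_erase_mul _ _ (Finset.mem_univ x)]
        have h1 : ∏ y ∈ Finset.univ.erase x, (c y).factorial
            = ∏ y ∈ Finset.univ.erase x, (c' y).factorial := by
          apply Finset.prod_congr rfl
          intro y hy
          have : y ≠ x := Finset.ne_of_mem_erase hy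
          simp [c', this]
        rw [h1]
        have h2 : (c x).factorial = c x * (c' x).factorial := by
          have : c' x = c x - 1 := by simp [c']
          rw [this]
          obtain ⟨m, hm⟩ := Nat.exists_eq_succ_of_ne_zero hx.ne'
          rw [hm]; simp [Nat.factorial_succ]
        rw [h2]; ring
      rw [hfac, mul_assoc, Nat.multinomial_spec, hsum']
    · simp only [hx, if_neg, mul_zero]
      have : c x = 0 := by omega
      simp [this]
  rw [Finset.sum_congr rfl (fun x _ => hterm x), ← Finset.sum_mul, hc,
    Nat.factorial_succ]

lemma count_cons {k : ℕ} (x : X) (t : Fin k → X) (y : X) :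
    (countMap (k+1) (Fin.cons x t)).1 y = (if x = y then 1 else 0) + (countMap k t).1 y := by
  simp only [countMap]
  rw [Finset.card_filter, Finset.card_filter, Fin.sum_univ_succ]
  simp [Fin.cons_zero, Fin.cons_succ]

lemma card_atom :
    ∀ (k : ℕ) (c : X → ℕ), ∑ x, c x = k →
      (Finset.univ.filter fun z : Fin k → X => (countMap k z).1 = c).card
        = Nat.multinomial Finset.univ c := by
  intro k
  induction k with
  | zero =>
    intro c hc
    have hc0 : ∀ x, c x = 0 := fun x =>
      Finset.sum_eq_zero_iff.mp hc x (Finset.mem_univ x)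
    have h1 : (Finset.univ.filter fun z : Fin 0 → X => (countMap 0 z).1 = c)
        = Finset.univ := by
      apply Finset.filter_true_of_mem
      intro z _
      funext y
      simp [countMap, hc0 y]
    rw [h1]
    have h2 : Nat.multinomial Finset.univ c = 1 := by
      have := Nat.multinomial_spec Finset.univ c
      simp only [hc0] at this
      simpa using this
    simp [h2, Finset.card_univ]
  | succ k ih =>
    intro c hc
    rw [Finset.card_filter]
    rw [← Equiv.sum_comp (Fin.consEquiv (fun _ : Fin (k+1) => X))
      (fun z => if (countMap (k+1) z).1 = c then 1 else 0)]
    rw [Fintype.sum_prod_type]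
    have hcons : ∀ (x : X) (t : Fin k → X),
        (Fin.consEquiv (fun _ : Fin (k+1) => X)) (x, t) = Fin.cons x t := fun _ _ => rfl
    rw [mult_rec c k hc]
    apply Finset.sum_congr rfl
    intro x _
    by_cases hx : 0 < c x
    · rw [if_pos hx]
      have hiff : ∀ t : Fin k → X,
          ((countMap (k+1) (Fin.cons x t)).1 = c) ↔
          ((countMap k t).1 = fun y => c y - if y = x then 1 else 0) := by
        intro t
        constructor
        · intro h
          funext y
          have hy := congrFun h y
          rw [count_cons x t y] at hy
          by_cases hxy : y = x
          · subst hxy; simp at hy ⊢; omega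
          · simp [hxy, Ne.symm hxy] at hy ⊢; omega
        · intro h
          funext y
          rw [count_cons x t y]
          have hy := congrFun h y
          by_cases hxy : y = x
          · subst hxy; simp at hy ⊢; omega
          · simp [hxy, Ne.symm hxy] at hy ⊢; omega
      have hsum' : ∑ y, (c y - if y = x then 1 else 0) = k := by
        have h1 : ∑ y, (c y - if y = x then 1 else 0)
            = (∑ y, c y) - (∑ y : X, if y = x then 1 else 0) := by
          rw [Finset.sum_tsub_distrib]
          intro y _
          by_cases h : y = x <;> simp [h] <;> omega
        simp only [Finset.sum_ite_eq', Finset.mem_univ, if_pos] at h1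
        omega
      rw [← ih _ hsum', Finset.card_filter]
      apply Finset.sum_congr rfl
      intro t _
      rw [hcons]
      simp only [hiff t]
    · rw [if_neg hx]
      apply Finset.sum_eq_zero
      intro t _
      rw [hcons, if_neg]
      intro h
      have hy := congrFun h x
      rw [count_cons x t x] at hy
      simp at hy
      omega

end Aux

/-- the multiple hyper-geometric prevision of a cylindrical extension:
`MuHy^{n+k}(f̃|μ) = ∑_m (ν(μ−m)ν(m)/ν(μ)) MuHy^n(f|m)`. -/
theorem stmt7 {X : Type*} [Fintype X] [DecidableEq X] [Nonempty X] {n k : ℕ} (hn : 1 ≤ n)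
    (f : (Fin n → X) → ℝ) (μ : CVec X (n + k)) :
    MuHy (cylExt f : (Fin (n + k) → X) → ℝ) μ =
      ∑ m : CVec X n, ((nuSub μ m : ℝ) * (nu m : ℝ) / (nu μ : ℝ)) * MuHy f m := by
  classical
  set e : ((Fin n → X) × (Fin k → X)) ≃ (Fin (n + k) → X) :=
    (Equiv.sumArrowEquivProdArrow (Fin n) (Fin k) X).symm.trans
      (finSumFinEquiv.arrowCongr (Equiv.refl X)) with he
  have he_app : ∀ (w : Fin n → X) (t : Fin k → X) (j : Fin (n + k)),
      e (w, t) j = Sum.elim w t (finSumFinEquiv.symm j) := fun _ _ _ => rfl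
  have count_split : ∀ (w : Fin n → X) (t : Fin k → X) (y : X),
      (countMap (n + k) (e (w, t))).1 y = (countMap n w).1 y + (countMap k t).1 y := by
    intro w t y
    simp only [countMap]
    rw [Finset.card_filter, Finset.card_filter, Finset.card_filter, Fin.sum_univ_add]
    congr 1
    · apply Finset.sum_congr rfl
      intro i _
      simp [he_app]
    · apply Finset.sum_congr rfl
      intro i _
      simp [he_app]
  have cyl_e : ∀ (w : Fin n → X) (t : Fin k → X), cylExt f (e (w, t)) = f w := by
    intro w t
    simp only [cylExt]
    congr 1
    funext i
    have h1 : (Fin.castLE (Nat.le_add_right n k) i) = Fin.castAdd k i := rfl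
    rw [h1, he_app]
    simp
  have hS : ∑ z ∈ Finset.univ.filter (fun z : Fin (n + k) → X => countMap (n + k) z = μ),
        cylExt f z
      = ∑ m : CVec X n, (nuSub μ m : ℝ) *
          ∑ w ∈ Finset.univ.filter (fun w : Fin n → X => countMap n w = m), f w := by
    rw [Finset.sum_filter]
    rw [← Equiv.sum_comp e (fun z => if countMap (n + k) z = μ then cylExt f z else 0)]
    rw [Fintype.sum_prod_type]
    have step1 : ∀ w : Fin n → X,
        (∑ t : Fin k → X, if countMap (n + k) (e (w, t)) = μ then cylExt f (e (w, t)) else 0)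
        = (nuSub μ (countMap n w) : ℝ) * f w := by
      intro w
      by_cases hw : ∀ x, (countMap n w).1 x ≤ μ.1 x
      · have hiff : ∀ t : Fin k → X, (countMap (n + k) (e (w, t)) = μ) ↔
            ((countMap k t).1 = fun y => μ.1 y - (countMap n w).1 y) := by
          intro t
          rw [Subtype.ext_iff]
          constructor
          · intro h
            funext y
            have hy := congrFun h y
            rw [count_split w t y] at hy
            omega
          · intro h
            funext y
            rw [count_split w t y]
            have hy := congrFun h y
            have hwy := hw y
            omega
        have hsum' : ∑ y, (μ.1 y - (countMap n w).1 y) = k := by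
          have h1 : ∑ y, (μ.1 y - (countMap n w).1 y)
              = (∑ y, μ.1 y) - (∑ y, (countMap n w).1 y) :=
            Finset.sum_tsub_distrib Finset.univ (fun y _ => hw y)
          rw [μ.2, (countMap n w).2] at h1
          omega
        calc (∑ t : Fin k → X,
                if countMap (n + k) (e (w, t)) = μ then cylExt f (e (w, t)) else 0)
            = ∑ t : Fin k → X,
                if (countMap k t).1 = (fun y => μ.1 y - (countMap n w).1 y) then f w
                else 0 := by
              apply Finset.sum_congr rfl
              intro t _
              rw [cyl_e w t]
              simp only [hiff t]
          _ = ∑ t ∈ Finset.univ.filter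
                (fun t : Fin k → X =>
                  (countMap k t).1 = fun y => μ.1 y - (countMap n w).1 y), f w := by
              rw [Finset.sum_filter]
          _ = (nuSub μ (countMap n w) : ℝ) * f w := by
              rw [Finset.sum_const, card_atom k _ hsum', nsmul_eq_mul]
              congr 1
              rw [nuSub, if_pos hw]
      · have h0 : (nuSub μ (countMap n w) : ℝ) = 0 := by
          rw [nuSub, if_neg hw]
          norm_num
        rw [h0, zero_mul]
        apply Finset.sum_eq_zero
        intro t _
        rw [if_neg]
        intro h
        apply hw
        intro x
        have hx := congrFun (congrArg Subtype.val h) x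
        rw [count_split w t x] at hx
        omega
    rw [Finset.sum_congr rfl (fun w _ => step1 w)]
    rw [← Finset.sum_fiberwise Finset.univ (fun w : Fin n → X => countMap n w)
      (fun w => (nuSub μ (countMap n w) : ℝ) * f w)]
    apply Finset.sum_congr rfl
    intro m _
    rw [Finset.mul_sum]
    apply Finset.sum_congr rfl
    intro w hw
    rw [(Finset.mem_filter.mp hw).2]
  simp only [MuHy]
  rw [hS, Finset.sum_div]
  apply Finset.sum_congr rfl
  intro m _
  have hnum : (nu m : ℝ) ≠ 0 :=
    Nat.cast_ne_zero.mpr (Nat.multinomial_pos _ _).ne'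
  have hnuμ : (nu μ : ℝ) ≠ 0 :=
    Nat.cast_ne_zero.mpr (Nat.multinomial_pos _ _).ne'
  field_simp
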